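/- arXiv:2507.16301 — 2 statements merged into one kernel-verified Lean document; each statement's English description precedes it below -/
import Mathlib

section
/- Let G be a connected simple graph of order n ≥ 4. Then the automorphism group of G is isomorphic (as an abstract group) to the automorphism group of the central graph C(G), i.e., Aut(G) ≅ Aut(C(G)). -/
open SimpleGraph

/-- The subdivision graph `S(G)`: each edge `{u,v}` of `G` is replaced by a new
vertex (the element of `G.edgeSet`) adjacent to both `u` and `v`. -/
def subdivisionGraph {V : Type*} (G : SimpleGraph V) : SimpleGraph (V ⊕ G.edgeSet) where
  Adj x y :=
    match x, y with
    | Sum.inl u, Sum.inr e => u ∈ (e : Sym2 V)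
    | Sum.inr e, Sum.inl u => u ∈ (e : Sym2 V)
    | _, _ => False
  symm := by constructor; rintro (u | e) (v | f) h <;> simp_all
  loopless := by constructor; rintro (u | e) h <;> simp_all

/-- The central graph `C(G)`: obtained from the subdivision graph `S(G)` by joining
every pair of distinct vertices of `G` that are non-adjacent in `G`. -/
def centralGraph {V : Type*} (G : SimpleGraph V) : SimpleGraph (V ⊕ G.edgeSet) where
  Adj x y :=
    match x, y with
    | Sum.inl u, Sum.inl v => u ≠ v ∧ ¬ G.Adj u v
    | Sum.inl u, Sum.inr e => u ∈ (e : Sym2 V)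
    | Sum.inr e, Sum.inl u => u ∈ (e : Sym2 V)
    | Sum.inr _, Sum.inr _ => False
  symm := by
    constructor
    rintro (u | e) (v | f) h
    · exact ⟨h.1.symm, fun a => h.2 a.symm⟩
    · exact h
    · exact h
    · exact h
  loopless := by
    constructor
    rintro (u | e) h
    · exact h.1 rfl
    · exact h

/-- The middle graph `M(G)`: obtained from the subdivision graph `S(G)` by joining
each pair of distinct subdivided vertices corresponding to adjacent edges of `G`. -/
def middleGraph {V : Type*} (G : SimpleGraph V) : SimpleGraph (V ⊕ G.edgeSet) where
  Adj x y :=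
    match x, y with
    | Sum.inl u, Sum.inr e => u ∈ (e : Sym2 V)
    | Sum.inr e, Sum.inl u => u ∈ (e : Sym2 V)
    | Sum.inr e, Sum.inr f => e ≠ f ∧ ∃ u, u ∈ (e : Sym2 V) ∧ u ∈ (f : Sym2 V)
    | Sum.inl _, Sum.inl _ => False
  symm := by
    constructor
    rintro (u | e) (v | f) h
    · exact h
    · exact h
    · exact h
    · exact ⟨h.1.symm, h.2.imp fun u hu => ⟨hu.2, hu.1⟩⟩
  loopless := by
    constructor
    rintro (u | e) h
    · exact h
    · exact h.1 rfl

/-- The line graph `L(G)`: vertices are the edges of `G`, two distinct edges being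
adjacent when they share an endpoint. -/
def lineG {V : Type*} (G : SimpleGraph V) : SimpleGraph G.edgeSet where
  Adj e f := e ≠ f ∧ ∃ u, u ∈ (e : Sym2 V) ∧ u ∈ (f : Sym2 V)
  symm := ⟨fun e f h => ⟨h.1.symm, h.2.imp fun u hu => ⟨hu.2, hu.1⟩⟩⟩
  loopless := ⟨fun e h => h.1 rfl⟩

/-- The endline graph `G⁺`: to each vertex `v` of `G` we attach a new pendant
vertex; `Sum.inl` is the copy of `V(G)` and `Sum.inr` are the new vertices. -/
def endlineGraph {V : Type*} (G : SimpleGraph V) : SimpleGraph (V ⊕ V) where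
  Adj x y :=
    match x, y with
    | Sum.inl u, Sum.inl v => G.Adj u v
    | Sum.inl u, Sum.inr v => u = v
    | Sum.inr u, Sum.inl v => u = v
    | Sum.inr _, Sum.inr _ => False
  symm := by
    constructor
    rintro (u | u) (v | v) h
    · exact h.symm
    · exact h.symm
    · exact h.symm
    · exact h
  loopless := by
    constructor
    rintro (u | u) h
    · exact G.irrefl h
    · exact h

/-- The join `G₁ + G₂` of two vertex-disjoint graphs: their disjoint union together
with all edges between the two vertex sets. -/
def joinGraph {V₁ V₂ : Type*} (G₁ : SimpleGraph V₁) (G₂ : SimpleGraph V₂) :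
    SimpleGraph (V₁ ⊕ V₂) where
  Adj x y :=
    match x, y with
    | Sum.inl u, Sum.inl v => G₁.Adj u v
    | Sum.inr u, Sum.inr v => G₂.Adj u v
    | Sum.inl _, Sum.inr _ => True
    | Sum.inr _, Sum.inl _ => True
  symm := by
    constructor
    rintro (u | u) (v | v) h
    · exact h.symm
    · trivial
    · trivial
    · exact h.symm
  loopless := by
    constructor
    rintro (u | u) h
    · exact G₁.irrefl h
    · exact G₂.irrefl h

/-- The maximum degree `Δ(H)` of a graph (as a supremum of cardinalities of
neighborhoods, which agrees with the usual maximum degree for finite graphs). -/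
noncomputable def maxDeg {W : Type*} (H : SimpleGraph W) : ℕ :=
  sSup {k | ∃ v : W, k = (H.neighborSet v).ncard}

/-- A graph is regular if all vertices have the same degree. -/
def IsRegularGraph {W : Type*} (H : SimpleGraph W) : Prop :=
  ∀ u v : W, (H.neighborSet u).ncard = (H.neighborSet v).ncard

/-- The distinguishing number `D(H)`: the least `d` such that `H` admits a vertex
coloring with `d` colors preserved only by the identity automorphism. -/
noncomputable def distinguishingNumber {W : Type*} (H : SimpleGraph W) : ℕ :=
  sInf {d | ∃ c : W → Fin d, ∀ φ : H ≃g H, (∀ v, c (φ v) = c v) → ∀ v, φ v = v}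

/-- The distinguishing index `D'(H)`: the least `d` such that `H` admits an edge
coloring with `d` colors preserved only by the identity automorphism. -/
noncomputable def distinguishingIndex {W : Type*} (H : SimpleGraph W) : ℕ :=
  sInf {d | ∃ c : H.edgeSet → Fin d,
    ∀ φ : H ≃g H, (∀ e, c (φ.mapEdgeSet e) = c e) → ∀ v, φ v = v}

/-- A proper total coloring of `H` with `d` colors: adjacent vertices, adjacent
edges, and incident vertex/edge pairs receive distinct colors. -/
def IsProperTotalColoring {W : Type*} (H : SimpleGraph W) {d : ℕ}
    (f : W ⊕ H.edgeSet → Fin d) : Prop :=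
  (∀ u v : W, H.Adj u v → f (Sum.inl u) ≠ f (Sum.inl v)) ∧
  (∀ e e' : H.edgeSet, e ≠ e' → (∃ u, u ∈ (e : Sym2 W) ∧ u ∈ (e' : Sym2 W)) →
    f (Sum.inr e) ≠ f (Sum.inr e')) ∧
  (∀ (v : W) (e : H.edgeSet), v ∈ (e : Sym2 W) → f (Sum.inl v) ≠ f (Sum.inr e))

/-- An automorphism `φ` preserves a total coloring `f`. -/
def PreservesTotalColoring {W : Type*} (H : SimpleGraph W) {d : ℕ}
    (f : W ⊕ H.edgeSet → Fin d) (φ : H ≃g H) : Prop :=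
  (∀ v : W, f (Sum.inl (φ v)) = f (Sum.inl v)) ∧
  (∀ e : H.edgeSet, f (Sum.inr (φ.mapEdgeSet e)) = f (Sum.inr e))

/-- The total chromatic number `χ''(H)`. -/
noncomputable def totalChromaticNumber {W : Type*} (H : SimpleGraph W) : ℕ :=
  sInf {d | ∃ f : W ⊕ H.edgeSet → Fin d, IsProperTotalColoring H f}

/-- The total distinguishing chromatic number `χ''_D(H)`: the least `d` such that
`H` has a proper total coloring with `d` colors preserved only by the identity. -/
noncomputable def totalDistinguishingChromaticNumber {W : Type*} (H : SimpleGraph W) : ℕ :=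
  sInf {d | ∃ f : W ⊕ H.edgeSet → Fin d, IsProperTotalColoring H f ∧
    ∀ φ : H ≃g H, PreservesTotalColoring H f φ → ∀ v, φ v = v}

/-- The color class `C_H(u)` of a vertex under a total coloring: the color of `u`
together with the colors of the edges incident to `u`. -/
def totalColorClass {W : Type*} (H : SimpleGraph W) {d : ℕ}
    (f : W ⊕ H.edgeSet → Fin d) (u : W) : Set (Fin d) :=
  {f (Sum.inl u)} ∪ {x | ∃ e : H.edgeSet, u ∈ (e : Sym2 W) ∧ x = f (Sum.inr e)}

/-- An AVD-total coloring: a proper total coloring in which adjacent vertices have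
distinct color classes. -/
def IsAVDTotalColoring {W : Type*} (H : SimpleGraph W) {d : ℕ}
    (f : W ⊕ H.edgeSet → Fin d) : Prop :=
  IsProperTotalColoring H f ∧
  ∀ u v : W, H.Adj u v → totalColorClass H f u ≠ totalColorClass H f v

/-- The AVD-total chromatic number `χ''ₐ(H)`. -/
noncomputable def avdTotalChromaticNumber {W : Type*} (H : SimpleGraph W) : ℕ :=
  sInf {d | ∃ f : W ⊕ H.edgeSet → Fin d, IsAVDTotalColoring H f}

/-- A total dominator coloring: a proper vertex coloring such that every vertex is
adjacent to every vertex of some (nonempty) color class. -/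
def IsTotalDominatorColoring {W : Type*} (H : SimpleGraph W) {d : ℕ}
    (c : W → Fin d) : Prop :=
  (∀ u v : W, H.Adj u v → c u ≠ c v) ∧
  (∀ v : W, ∃ i : Fin d, (∃ w, c w = i) ∧ ∀ w, c w = i → H.Adj v w)

/-- The total dominator chromatic number `χᵗ_d(H)`. -/
noncomputable def tdChromaticNumber {W : Type*} (H : SimpleGraph W) : ℕ :=
  sInf {d | ∃ c : W → Fin d, IsTotalDominatorColoring H c}

section Aux
variable {V : Type*} [Fintype V] (G : SimpleGraph V)

omit [Fintype V] in
lemma cg_adj_ll {u v : V} : (centralGraph G).Adj (Sum.inl u) (Sum.inl v) ↔ u ≠ v ∧ ¬ G.Adj u v :=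
  Iff.rfl

omit [Fintype V] in
lemma cg_adj_lr {u : V} {e : G.edgeSet} :
    (centralGraph G).Adj (Sum.inl u) (Sum.inr e) ↔ u ∈ (e : Sym2 V) := Iff.rfl

omit [Fintype V] in
lemma cg_adj_rl {u : V} {e : G.edgeSet} :
    (centralGraph G).Adj (Sum.inr e) (Sum.inl u) ↔ u ∈ (e : Sym2 V) := Iff.rfl

omit [Fintype V] in
lemma cg_adj_rr {e f : G.edgeSet} :
    ¬ (centralGraph G).Adj (Sum.inr e) (Sum.inr f) := fun h => h

lemma ncard_nbhd_inr (e : G.edgeSet) :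
    ((centralGraph G).neighborSet (Sum.inr e)).ncard = 2 := by
  obtain ⟨e, he⟩ := e
  induction e using Sym2.ind with
  | _ a b =>
    have hab : a ≠ b := G.ne_of_adj (by simpa using he)
    have h2 : (centralGraph G).neighborSet (Sum.inr ⟨s(a,b), he⟩) =
        {Sum.inl a, Sum.inl b} := by
      ext (u | f)
      · simp [neighborSet, cg_adj_rl, Sym2.mem_iff]
      · simp [neighborSet]
        exact cg_adj_rr G
    rw [h2, Set.ncard_pair (by simpa using hab)]

lemma three_le_ncard_nbhd_inl (hn : 4 ≤ Fintype.card V) (u : V) :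
    3 ≤ ((centralGraph G).neighborSet (Sum.inl u)).ncard := by
  classical
  set S := (centralGraph G).neighborSet (Sum.inl u) with hS
  have hmem : ∀ v : {v : V // v ≠ u},
      (if h : G.Adj u v.1 then (Sum.inr ⟨s(u, v.1), h⟩ : V ⊕ G.edgeSet) else Sum.inl v.1) ∈ S := by
    rintro ⟨v, hv⟩
    by_cases h : G.Adj u v <;> simp only [h, dite_true, dite_false]
    · exact (mem_neighborSet _ _ _).2 ((cg_adj_lr G).2 (by simp))
    · exact (mem_neighborSet _ _ _).2 ((cg_adj_ll G).2 ⟨Ne.symm hv, h⟩)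
  set f : {v : V // v ≠ u} → S := fun v => ⟨_, hmem v⟩ with hf
  have hinj : Function.Injective f := by
    rintro ⟨v, hv⟩ ⟨w, hw⟩ h
    simp only [hf, Subtype.mk.injEq] at h
    by_cases h1 : G.Adj u v <;> by_cases h2 : G.Adj u w <;>
      simp only [h1, h2, dite_true, dite_false] at h
    · ext
      have := Sum.inr.inj h
      have : s(u, v) = s(u, w) := congrArg Subtype.val this
      rw [Sym2.eq_iff] at this
      rcases this with ⟨_, h⟩ | ⟨h, h'⟩
      · exact h
      · exact absurd h' hv
    · exact absurd h (by simp)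
    · exact absurd h (by simp)
    · ext; exact Sum.inl.inj h
  have hcard : Fintype.card {v : V // v ≠ u} ≤ S.ncard := by
    rw [← Nat.card_coe_set_eq, ← Nat.card_eq_fintype_card]
    exact Nat.card_le_card_of_injective f hinj
  have : Fintype.card {v : V // v ≠ u} = Fintype.card V - 1 := by
    simp [Fintype.card_subtype_compl]
  omega

end Aux

section Main
variable {V : Type*} (G : SimpleGraph V)

lemma mem_map_edge (φ : G ≃g G) (u : V) (e : G.edgeSet) :
    φ u ∈ (φ.mapEdgeSet e : Sym2 V) ↔ u ∈ (e : Sym2 V) := by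
  show φ u ∈ Sym2.map φ (e : Sym2 V) ↔ _
  rw [Sym2.mem_map]
  constructor
  · rintro ⟨a, ha, h⟩
    rwa [← φ.injective h]
  · exact fun h => ⟨u, h, rfl⟩

def centralIso (φ : G ≃g G) : centralGraph G ≃g centralGraph G where
  toEquiv := Equiv.sumCongr φ.toEquiv φ.mapEdgeSet
  map_rel_iff' := by
    rintro (u | e) (v | f)
    · show (centralGraph G).Adj (Sum.inl (φ u)) (Sum.inl (φ v)) ↔ _
      rw [cg_adj_ll, cg_adj_ll, φ.injective.ne_iff, φ.map_adj_iff]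
    · show (centralGraph G).Adj (Sum.inl (φ u)) (Sum.inr (φ.mapEdgeSet f)) ↔ _
      rw [cg_adj_lr, cg_adj_lr, mem_map_edge]
    · show (centralGraph G).Adj (Sum.inr (φ.mapEdgeSet e)) (Sum.inl (φ v)) ↔ _
      rw [cg_adj_rl, cg_adj_rl, mem_map_edge]
    · exact Iff.rfl

lemma centralIso_apply_inl (φ : G ≃g G) (u : V) :
    centralIso G φ (Sum.inl u) = Sum.inl (φ u) := rfl

lemma centralIso_apply_inr (φ : G ≃g G) (e : G.edgeSet) :
    centralIso G φ (Sum.inr e) = Sum.inr (φ.mapEdgeSet e) := rfl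

def centralHom : (G ≃g G) →* (centralGraph G ≃g centralGraph G) where
  toFun := centralIso G
  map_one' := by
    ext x
    rcases x with u | e
    · rfl
    · refine congrArg Sum.inr (Subtype.ext ?_)
      show Sym2.map (⇑(1 : G ≃g G)) (e : Sym2 V) = (e : Sym2 V)
      have h : ⇑(1 : G ≃g G) = id := rfl
      rw [h, Sym2.map_id, id]
  map_mul' := by
    intro φ φ'
    ext x
    rcases x with u | e
    · rfl
    · refine congrArg Sum.inr (Subtype.ext ?_)
      show Sym2.map (⇑(φ * φ')) (e : Sym2 V) = Sym2.map φ (Sym2.map φ' (e : Sym2 V))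
      rw [Sym2.map_map]
      rfl

end Main


/-- For a connected graph `G` of order at least `4`,
`Aut(G) ≅ Aut(C(G))` as abstract groups. -/
theorem stmt_2 {V : Type*} [Fintype V] (G : SimpleGraph V)
    (hconn : G.Connected) (hn : 4 ≤ Fintype.card V) :
    Nonempty ((G ≃g G) ≃* (centralGraph G ≃g centralGraph G)) := by
  classical
  refine ⟨MulEquiv.ofBijective (centralHom G) ⟨?_, ?_⟩⟩
  · intro φ φ' h
    ext u
    have := DFunLike.congr_fun h (Sum.inl u)
    exact Sum.inl.inj this
  · intro ψ
    have hdeg : ∀ x, ((centralGraph G).neighborSet (ψ x)).ncard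
        = ((centralGraph G).neighborSet x).ncard := by
      intro x
      rw [← Nat.card_coe_set_eq, ← Nat.card_coe_set_eq]
      exact (Nat.card_congr (ψ.mapNeighborSet x)).symm
    have hinl : ∀ (χ : centralGraph G ≃g centralGraph G) (u : V),
        ∃ v, χ (Sum.inl u) = Sum.inl v := by
      intro χ u
      have hdegχ : ((centralGraph G).neighborSet (χ (Sum.inl u))).ncard
          = ((centralGraph G).neighborSet (Sum.inl u)).ncard := by
        rw [← Nat.card_coe_set_eq, ← Nat.card_coe_set_eq]
        exact (Nat.card_congr (χ.mapNeighborSet (Sum.inl u))).symm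
      rcases h : χ (Sum.inl u) with v | e
      · exact ⟨v, rfl⟩
      · exfalso
        rw [h, ncard_nbhd_inr] at hdegχ
        have := three_le_ncard_nbhd_inl G hn u
        omega
    have hinr : ∀ e : G.edgeSet, ∃ f, ψ (Sum.inr e) = Sum.inr f := by
      intro e
      rcases h : ψ (Sum.inr e) with v | f
      · exfalso
        have hd := hdeg (Sum.inr e)
        rw [h, ncard_nbhd_inr] at hd
        have := three_le_ncard_nbhd_inl G hn v
        omega
      · exact ⟨f, rfl⟩
    choose σ hσ using hinl ψ
    choose τ hτ using hinl ψ.symm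
    have hlinv : Function.LeftInverse τ σ := by
      intro u
      have : ψ.symm (Sum.inl (σ u)) = Sum.inl u := by
        rw [← hσ u]; exact ψ.symm_apply_apply _
      rw [hτ (σ u)] at this
      exact Sum.inl.inj this
    have hrinv : Function.RightInverse τ σ := by
      intro u
      have : ψ (Sum.inl (τ u)) = Sum.inl u := by
        rw [← hτ u]; exact ψ.apply_symm_apply _
      rw [hσ (τ u)] at this
      exact Sum.inl.inj this
    have hσinj : Function.Injective σ := hlinv.injective
    have hadj : ∀ u v : V, G.Adj (σ u) (σ v) ↔ G.Adj u v := by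
      intro u v
      by_cases huv : u = v
      · subst huv; simp
      · have h1 : (centralGraph G).Adj (ψ (Sum.inl u)) (ψ (Sum.inl v))
            ↔ (centralGraph G).Adj (Sum.inl u) (Sum.inl v) := ψ.map_adj_iff
        rw [hσ u, hσ v, cg_adj_ll, cg_adj_ll] at h1
        have hne : σ u ≠ σ v := fun h => huv (hσinj h)
        constructor
        · intro h
          by_contra hc
          exact (h1.2 ⟨huv, hc⟩).2 h
        · intro h
          by_contra hc
          exact (h1.1 ⟨hne, hc⟩).2 h
    set φ : G ≃g G := ⟨⟨σ, τ, hlinv, hrinv⟩, by intro a b; exact hadj a b⟩ with hφ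
    refine ⟨φ, ?_⟩
    ext x
    rcases x with u | e
    · show Sum.inl (σ u) = ψ (Sum.inl u)
      exact (hσ u).symm
    · show Sum.inr (φ.mapEdgeSet e) = ψ (Sum.inr e)
      obtain ⟨f, hf⟩ := hinr e
      have hmem : ∀ w, w ∈ (e : Sym2 V) → σ w ∈ (f : Sym2 V) := by
        intro w hw
        have h1 : (centralGraph G).Adj (Sum.inl w) (Sum.inr e) := (cg_adj_lr G).2 hw
        have h2 : (centralGraph G).Adj (ψ (Sum.inl w)) (ψ (Sum.inr e)) :=
          ψ.map_adj_iff.2 h1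
        rw [hσ w, hf] at h2
        exact (cg_adj_lr G).1 h2
      rw [hf]
      refine congrArg Sum.inr (Subtype.ext ?_)
      obtain ⟨e', he'⟩ := e
      induction e' using Sym2.ind with
      | _ a b =>
        have hab : a ≠ b := G.ne_of_adj (by simpa using he')
        have ha : σ a ∈ (f : Sym2 V) := hmem a (by simp)
        have hb : σ b ∈ (f : Sym2 V) := hmem b (by simp)
        have hne : σ a ≠ σ b := fun h => hab (hσinj h)
        have : (φ.mapEdgeSet ⟨s(a,b), he'⟩ : Sym2 V) = s(σ a, σ b) := rfl
        rw [this]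
        exact (Sym2.eq_of_ne_mem hne ha hb (Sym2.mem_mk_left _ _) (Sym2.mem_mk_right _ _)).symm
end

section
/- Let G be a connected simple graph of order n ≥ 4 with maximum degree Δ(G). Then the distinguishing number of the central graph satisfies D(C(G)) ≤ ⌈√Δ(G)⌉. -/
open SimpleGraph

namespace Stmt7Aux

open SimpleGraph Set

open scoped Classical

variable {V : Type*}

/-! ### The construction -/

noncomputable def nbr (G : SimpleGraph V) (v : V) : ℕ := (G.neighborSet v).ncard

def pset (G : SimpleGraph V) (r v : V) : Set V :=
  {x | G.Adj v x ∧ G.dist r x + 1 = G.dist r v}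

noncomputable def parent (G : SimpleGraph V) (r v : V) : V :=
  if h : (pset G r v).Nonempty then h.choose else v

def children (G : SimpleGraph V) (r p : V) : Set V :=
  {x | x ≠ r ∧ parent G r x = p}

def c0 (d : ℕ) (hd : 2 ≤ d) : Fin d := ⟨0, by omega⟩
def c1 (d : ℕ) (hd : 2 ≤ d) : Fin d := ⟨1, by omega⟩

def enum (d : ℕ) (hd : 2 ≤ d) (i : ℕ) : Fin d × Fin d :=
  (⟨i / d % d, Nat.mod_lt _ (by omega)⟩, ⟨i % d, Nat.mod_lt _ (by omega)⟩)

def allowed (G : SimpleGraph V) (r : V) (Δ d : ℕ) (hd : 2 ≤ d) (p : V) :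
    Set (Fin d × Fin d) :=
  if p = r then enum d hd '' Set.Iio Δ
  else if Δ ≤ 3 then {q | q.1 = c1 d hd} else Set.univ

noncomputable def basef (G : SimpleGraph V) (r : V) (Δ d : ℕ) (hd : 2 ≤ d) (p : V) :
    V → Fin d × Fin d :=
  if h : ∃ f : V → Fin d × Fin d, Set.InjOn f (children G r p) ∧
      Set.MapsTo f (children G r p) (allowed G r Δ d hd p) then h.choose
  else fun _ => (c0 d hd, c0 d hd)

noncomputable def desig (G : SimpleGraph V) (r p : V) : V :=
  if h : (children G r p).Nonempty then h.choose else p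

def presc (G : SimpleGraph V) (r : V) (Δ : ℕ) (p : V) : Prop :=
  4 ≤ Δ ∧ p ≠ r ∧ nbr G p = Δ ∧ (children G r p).Nonempty

noncomputable def iota (G : SimpleGraph V) (r : V) (Δ d : ℕ) (hd : 2 ≤ d) (p : V)
    (w : (Fin d × Fin d) × Fin d) : V → Fin d × Fin d :=
  if presc G r Δ p then
    Equiv.swap (basef G r Δ d hd p (desig G r p)) (w.1.1, w.2) ∘ basef G r Δ d hd p
  else basef G r Δ d hd p

/-! ### Basic lemmas -/

section Basic
variable {G : SimpleGraph V} {r : V} {Δ d : ℕ}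

lemma parent_mem {v : V} (h : (pset G r v).Nonempty) :
    parent G r v ∈ pset G r v := by
  rw [parent, dif_pos h]; exact h.choose_spec

lemma pset_nonempty (hconn : G.Connected) {v : V} (hv : v ≠ r) :
    (pset G r v).Nonempty := by
  obtain ⟨w, hw⟩ := hconn.exists_walk_length_eq_dist v r
  have hpos : 0 < G.dist r v := by
    have h0 := hconn.dist_eq_zero_iff (u := r) (v := v)
    have : G.dist r v ≠ 0 := fun hz => hv (h0.mp hz).symm
    omega
  cases w with
  | nil => exact absurd rfl hv
  | cons ha q =>
    rename_i x
    refine ⟨x, ha, ?_⟩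
    have hxr : G.dist r x ≤ q.length := by
      have := SimpleGraph.dist_le q.reverse
      simpa [SimpleGraph.Walk.length_reverse] using this
    have hcomm : G.dist v r = G.dist r v := SimpleGraph.dist_comm
    have hlen : q.length + 1 = G.dist r v := by
      have : (SimpleGraph.Walk.cons ha q).length = q.length + 1 := rfl
      omega
    -- lower bound : dist r v ≤ dist r x + 1
    obtain ⟨w2, hw2⟩ := hconn.exists_walk_length_eq_dist r x
    have hup : G.dist r v ≤ G.dist r x + 1 := by
      have := SimpleGraph.dist_le (w2.concat ha.symm)
      simpa [SimpleGraph.Walk.length_concat, hw2] using this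
    omega

lemma lvl_parent (hconn : G.Connected) {v : V} (hv : v ≠ r) :
    G.dist r (parent G r v) + 1 = G.dist r v :=
  (parent_mem (pset_nonempty hconn hv)).2

lemma adj_parent (hconn : G.Connected) {v : V} (hv : v ≠ r) :
    G.Adj v (parent G r v) :=
  (parent_mem (pset_nonempty hconn hv)).1

lemma lvl_parent_lt (hconn : G.Connected) {v : V} (hv : v ≠ r) :
    G.dist r (parent G r v) < G.dist r v := by
  have := lvl_parent (r := r) hconn hv; omega

lemma children_subset_nbhd (hconn : G.Connected) {p : V} :
    children G r p ⊆ G.neighborSet p := by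
  rintro x ⟨hxr, hxp⟩
  have := adj_parent (r := r) hconn hxr
  rw [hxp] at this
  exact this.symm

lemma children_lvl (hconn : G.Connected) {p x : V} (hx : x ∈ children G r p) :
    G.dist r x = G.dist r p + 1 := by
  have := lvl_parent (r := r) hconn hx.1
  rw [hx.2] at this; omega

lemma dist_eq_zero_iff_self (hconn : G.Connected) {v : V} :
    G.dist r v = 0 ↔ v = r := by
  rw [hconn.dist_eq_zero_iff]; exact eq_comm

/-- every neighbor of `r` is a child of `r` -/
lemma mem_children_r (hconn : G.Connected) {x : V} (hx : G.Adj r x) :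
    x ∈ children G r r := by
  have hxr : x ≠ r := hx.ne'
  have hd1 : G.dist r x = 1 := by
    have hle : G.dist r x ≤ 1 := by
      have := SimpleGraph.dist_le (SimpleGraph.Walk.cons hx (SimpleGraph.Walk.nil))
      simpa using this
    have : G.dist r x ≠ 0 := fun hz => hxr ((dist_eq_zero_iff_self hconn).mp hz)
    omega
  refine ⟨hxr, ?_⟩
  have hm := parent_mem (pset_nonempty hconn hxr)
  have : G.dist r (parent G r x) = 0 := by
    have := hm.2; omega
  exact (dist_eq_zero_iff_self hconn).mp this

lemma children_r_eq (hconn : G.Connected) :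
    children G r r = G.neighborSet r :=
  Set.Subset.antisymm (children_subset_nbhd hconn)
    (fun x hx => mem_children_r hconn hx)

lemma parent_not_mem_children (hconn : G.Connected) {p : V} (hp : p ≠ r) :
    parent G r p ∉ children G r p := by
  intro hmem
  have h1 := children_lvl hconn hmem
  have h2 := lvl_parent (r := r) hconn hp
  omega

lemma ncard_children_le [Fintype V] (hconn : G.Connected) (p : V) :
    (children G r p).ncard ≤ nbr G p :=
  Set.ncard_le_ncard (children_subset_nbhd hconn) (Set.toFinite _)

lemma ncard_children_le_sub [Fintype V] (hconn : G.Connected) {p : V} (hp : p ≠ r) :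
    (children G r p).ncard + 1 ≤ nbr G p := by
  have hsub : children G r p ⊆ G.neighborSet p \ {parent G r p} := by
    intro x hx
    exact ⟨children_subset_nbhd hconn hx, by
      simp only [Set.mem_singleton_iff]
      intro h; exact parent_not_mem_children hconn hp (h ▸ hx)⟩
  have h1 : (children G r p).ncard ≤ (G.neighborSet p \ {parent G r p}).ncard :=
    Set.ncard_le_ncard hsub (Set.toFinite _)
  have hmem : parent G r p ∈ G.neighborSet p := (adj_parent hconn hp)
  have h2 : (G.neighborSet p \ {parent G r p}).ncard = nbr G p - 1 :=
    Set.ncard_diff_singleton_of_mem hmem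
  have h3 : 1 ≤ nbr G p := by
    have : (({parent G r p} : Set V)).ncard ≤ (G.neighborSet p).ncard :=
      Set.ncard_le_ncard (by simpa using hmem) (Set.toFinite _)
    simpa [nbr] using this
  omega


lemma enum_injOn (hd : 2 ≤ d) : Set.InjOn (enum d hd) (Set.Iio (d * d)) := by
  intro i hi j hj hij
  simp only [Set.mem_Iio] at hi hj
  simp only [enum, Prod.mk.injEq, Fin.mk.injEq] at hij
  obtain ⟨hf, hs⟩ := hij
  have h1 : i / d < d := (Nat.div_lt_iff_lt_mul (show 0 < d by omega)).mpr hi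
  have h2 : j / d < d := (Nat.div_lt_iff_lt_mul (show 0 < d by omega)).mpr hj
  rw [Nat.mod_eq_of_lt h1, Nat.mod_eq_of_lt h2] at hf
  have hi' := Nat.div_add_mod i d
  have hj' := Nat.div_add_mod j d
  have hmul : d * (i / d) = d * (j / d) := by rw [hf]
  omega

lemma ncard_Iio (n : ℕ) : (Set.Iio n).ncard = n := by
  have : (Set.Iio n : Set ℕ) = ↑(Finset.range n) := by
    ext x; simp
  rw [this, Set.ncard_coe_finset, Finset.card_range]

lemma ncard_allowed_root (hd : 2 ≤ d) (hΔd : Δ ≤ d * d) :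
    (allowed G r Δ d hd r).ncard = Δ := by
  rw [allowed, if_pos rfl]
  rw [Set.ncard_image_of_injOn ((enum_injOn hd).mono (by
    intro x hx; simp only [Set.mem_Iio] at *; omega))]
  exact ncard_Iio Δ

lemma ncard_allowed_small (hd : 2 ≤ d) {p : V} (hp : p ≠ r) (hΔ3 : Δ ≤ 3) :
    (allowed G r Δ d hd p).ncard = d := by
  rw [allowed, if_neg hp, if_pos hΔ3]
  have : {q : Fin d × Fin d | q.1 = c1 d hd} = (fun b => (c1 d hd, b)) '' Set.univ := by
    ext ⟨q1, q2⟩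
    simp only [Set.mem_setOf_eq, Set.image_univ, Set.mem_range, Prod.mk.injEq]
    constructor
    · rintro rfl; exact ⟨q2, rfl, rfl⟩
    · rintro ⟨b, h1, h2⟩; exact h1.symm
  rw [this, Set.ncard_image_of_injective _ (fun a b h => (Prod.mk.injEq _ _ _ _).mp h |>.2),
    Set.ncard_univ, Nat.card_eq_fintype_card, Fintype.card_fin]

/-- generic: injection into a finite target of at least equal size -/
lemma exists_injOn_of_ncard_le [Fintype V] {W : Type*} {s : Set V} {t : Set W}
    (hne : t.Nonempty) (hcard : s.ncard ≤ t.ncard) (ht : t.Finite) :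
    ∃ f : V → W, Set.InjOn f s ∧ Set.MapsTo f s t := by
  haveI : Fintype s := (Set.toFinite s).fintype
  haveI : Fintype t := ht.fintype
  have hc : Fintype.card s ≤ Fintype.card t := by
    rwa [Set.ncard_eq_toFinset_card', Set.ncard_eq_toFinset_card',
      Set.toFinset_card, Set.toFinset_card] at hcard
  obtain ⟨emb⟩ := Function.Embedding.nonempty_of_card_le hc
  obtain ⟨w0, hw0⟩ := hne
  refine ⟨fun v => if h : v ∈ s then (emb ⟨v, h⟩ : W) else w0, ?_, ?_⟩
  · intro a ha b hb hab
    simp only [dif_pos ha, dif_pos hb] at hab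
    exact congrArg Subtype.val (emb.injective (Subtype.ext hab))
  · intro a ha
    simp only [Set.mem_setOf_eq, dif_pos ha]
    exact (emb ⟨a, ha⟩).2

lemma basef_exists [Fintype V] (hconn : G.Connected) (hd : 2 ≤ d) (hΔd : Δ ≤ d * d) (hΔ1 : 1 ≤ Δ)
    (hub : ∀ v, nbr G v ≤ Δ) (hr : nbr G r = Δ) (p : V) :
    ∃ f : V → Fin d × Fin d, Set.InjOn f (children G r p) ∧
      Set.MapsTo f (children G r p) (allowed G r Δ d hd p) := by
  apply exists_injOn_of_ncard_le
  · -- allowed nonempty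
    rw [allowed]
    by_cases hp : p = r
    · rw [if_pos hp]
      exact ⟨enum d hd 0, Set.mem_image_of_mem _ (by simp only [Set.mem_Iio]; omega)⟩
    · rw [if_neg hp]
      by_cases h3 : Δ ≤ 3
      · rw [if_pos h3]; exact ⟨(c1 d hd, c0 d hd), rfl⟩
      · rw [if_neg h3]; exact ⟨(c0 d hd, c0 d hd), trivial⟩
  · -- card bound
    by_cases hp : p = r
    · rw [hp, ncard_allowed_root hd hΔd]
      calc (children G r r).ncard ≤ nbr G r := ncard_children_le hconn r
        _ = Δ := hr
    · by_cases h3 : Δ ≤ 3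
      · rw [ncard_allowed_small hd hp h3]
        have := ncard_children_le_sub hconn hp
        have := hub p
        omega
      · rw [allowed, if_neg hp, if_neg h3, Set.ncard_univ, Nat.card_eq_fintype_card]
        simp only [Fintype.card_prod, Fintype.card_fin]
        have := ncard_children_le (r := r) hconn p
        have := hub p
        omega
  · exact Set.toFinite _

lemma basef_spec {p : V}
    (hex : ∃ f : V → Fin d × Fin d, Set.InjOn f (children G r p) ∧
      Set.MapsTo f (children G r p) (allowed G r Δ d hd p)) :
    Set.InjOn (basef G r Δ d hd p) (children G r p) ∧
      Set.MapsTo (basef G r Δ d hd p) (children G r p) (allowed G r Δ d hd p) := by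
  rw [basef, dif_pos hex]; exact hex.choose_spec

lemma desig_mem {p : V} (h : (children G r p).Nonempty) :
    desig G r p ∈ children G r p := by
  rw [desig, dif_pos h]; exact h.choose_spec

lemma iota_injOn {p : V} {w : (Fin d × Fin d) × Fin d}
    (hex : ∃ f : V → Fin d × Fin d, Set.InjOn f (children G r p) ∧
      Set.MapsTo f (children G r p) (allowed G r Δ d hd p)) :
    Set.InjOn (iota G r Δ d hd p w) (children G r p) := by
  have hinj := (basef_spec (hd := hd) hex).1
  rw [iota]
  split
  · intro a ha b hb hab
    exact hinj ha hb ((Equiv.swap _ _).injective hab)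
  · exact hinj

lemma iota_desig {p : V} {w : (Fin d × Fin d) × Fin d} (hpr : presc G r Δ p) :
    iota G r Δ d hd p w (desig G r p) = (w.1.1, w.2) := by
  rw [iota, if_pos hpr]
  simp only [Function.comp_apply, Equiv.swap_apply_left]

lemma iota_not_presc {p : V} {w : (Fin d × Fin d) × Fin d} (h : ¬ presc G r Δ p) :
    iota G r Δ d hd p w = basef G r Δ d hd p := by
  rw [iota, if_neg h]

end Basic

noncomputable def F (G : SimpleGraph V) (hconn : G.Connected) (r : V)
    (Δ d : ℕ) (hd : 2 ≤ d) (v : V) : (Fin d × Fin d) × Fin d :=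
  if hv : v = r then ((c0 d hd, c0 d hd), c0 d hd)
  else
    (iota G r Δ d hd (parent G r v) (F G hconn r Δ d hd (parent G r v)) v,
     if parent G r v = r then c0 d hd else (F G hconn r Δ d hd (parent G r v)).1.2)
termination_by G.dist r v
decreasing_by
  all_goals exact lvl_parent_lt hconn hv

section Colors
variable {G : SimpleGraph V} {r : V} {Δ d : ℕ}

noncomputable def cV (hconn : G.Connected) (r : V) (Δ d : ℕ) (hd : 2 ≤ d) (v : V) : Fin d :=
  if v = r then c0 d hd else (F G hconn r Δ d hd v).1.2

noncomputable def pr (hconn : G.Connected) (r : V) (Δ d : ℕ) (hd : 2 ≤ d) (v : V) :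
    Fin d × Fin d := (F G hconn r Δ d hd v).1

noncomputable def cE' (hconn : G.Connected) (r : V) (Δ d : ℕ) (hd : 2 ≤ d) (u v : V) : Fin d :=
  if u ≠ r ∧ parent G r u = v then (pr hconn r Δ d hd u).1
  else if v ≠ r ∧ parent G r v = u then (pr hconn r Δ d hd v).1
  else c1 d hd

lemma cE'_symm (hconn : G.Connected) (hd : 2 ≤ d) (u v : V) :
    cE' hconn r Δ d hd u v = cE' hconn r Δ d hd v u := by
  by_cases h1 : u ≠ r ∧ parent G r u = v <;> by_cases h2 : v ≠ r ∧ parent G r v = u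
  · exfalso
    have l1 := lvl_parent (r := r) hconn h1.1
    have l2 := lvl_parent (r := r) hconn h2.1
    rw [h1.2] at l1; rw [h2.2] at l2; omega
  · rw [cE', cE', if_pos h1, if_neg h2, if_pos h1]
  · rw [cE', cE', if_neg h1, if_pos h2, if_pos h2]
  · rw [cE', cE', if_neg h1, if_neg h2, if_neg h2, if_neg h1]

noncomputable def cE (hconn : G.Connected) (r : V) (Δ d : ℕ) (hd : 2 ≤ d) :
    Sym2 V → Fin d :=
  Sym2.lift ⟨fun u v => cE' hconn r Δ d hd u v, cE'_symm hconn hd⟩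

lemma F_spec (hconn : G.Connected) (hd : 2 ≤ d) {v : V} (hv : v ≠ r) :
    F G hconn r Δ d hd v =
      (iota G r Δ d hd (parent G r v) (F G hconn r Δ d hd (parent G r v)) v,
       if parent G r v = r then c0 d hd
       else (F G hconn r Δ d hd (parent G r v)).1.2) := by
  rw [F]
  exact dif_neg hv

lemma pr_eq (hconn : G.Connected) (hd : 2 ≤ d) {v : V} (hv : v ≠ r) :
    pr hconn r Δ d hd v =
      iota G r Δ d hd (parent G r v) (F G hconn r Δ d hd (parent G r v)) v := by
  rw [pr, F_spec hconn hd hv]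

lemma F2_eq_cV_parent (hconn : G.Connected) (hd : 2 ≤ d) {v : V} (hv : v ≠ r) :
    (F G hconn r Δ d hd v).2 = cV hconn r Δ d hd (parent G r v) := by
  rw [F_spec hconn hd hv, cV]

lemma cV_of_ne (hconn : G.Connected) (hd : 2 ≤ d) {x : V} (hx : x ≠ r) :
    cV hconn r Δ d hd x = (pr hconn r Δ d hd x).2 := by
  rw [cV, if_neg hx]; rfl

lemma cE_mk (hconn : G.Connected) (hd : 2 ≤ d) (u v : V) :
    cE hconn r Δ d hd s(u, v) = cE' hconn r Δ d hd u v := rfl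

lemma cE_child (hconn : G.Connected) (hd : 2 ≤ d) {p x : V} (hx : x ∈ children G r p) :
    cE hconn r Δ d hd s(p, x) = (pr hconn r Δ d hd x).1 := by
  rw [cE_mk, cE']
  have hc1 : ¬ (p ≠ r ∧ parent G r p = x) := by
    rintro ⟨hpr, hpx⟩
    have l1 := lvl_parent (r := r) hconn hpr
    have l2 := children_lvl hconn hx
    rw [hpx] at l1; omega
  rw [if_neg hc1, if_pos ⟨hx.1, hx.2⟩]

lemma cE_parent_edge (hconn : G.Connected) (hd : 2 ≤ d) {v : V} (hv : v ≠ r) :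
    cE hconn r Δ d hd s(v, parent G r v) = (pr hconn r Δ d hd v).1 := by
  rw [cE_mk, cE', if_pos ⟨hv, rfl⟩]

lemma cE_default (hconn : G.Connected) (hd : 2 ≤ d) {u v : V}
    (h1 : ¬ (u ≠ r ∧ parent G r u = v)) (h2 : ¬ (v ≠ r ∧ parent G r v = u)) :
    cE hconn r Δ d hd s(u, v) = c1 d hd := by
  rw [cE_mk, cE', if_neg h1, if_neg h2]

end Colors

/-! ### The core rigidity theorem -/

section Core
variable [Fintype V] {G : SimpleGraph V} {r : V} {Δ d : ℕ}

lemma choose_congr {α : Type*} {s t : Set α} (h : s = t) (hs : s.Nonempty)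
    (ht : t.Nonempty) : hs.choose = ht.choose := by
  subst h; rfl

lemma parent_eq_of_pset_eq {v w : V} (h : pset G r v = pset G r w)
    (hv : (pset G r v).Nonempty) (hw : (pset G r w).Nonempty) :
    parent G r v = parent G r w := by
  rw [parent, parent, dif_pos hv, dif_pos hw]
  exact choose_congr h hv hw

lemma iso_dist (hconn : G.Connected) (σ : G ≃g G) (u v : V) :
    G.dist (σ u) (σ v) = G.dist u v := by
  have h : ∀ (τ : G ≃g G) (a b : V), G.dist (τ a) (τ b) ≤ G.dist a b := by
    intro τ a b
    obtain ⟨w, hw⟩ := hconn.exists_walk_length_eq_dist a b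
    calc G.dist (τ a) (τ b) ≤ (w.map τ.toHom).length := SimpleGraph.dist_le _
      _ = w.length := by simp
      _ = _ := hw
  refine le_antisymm (h σ u v) ?_
  have := h σ.symm (σ u) (σ v)
  simpa using this

lemma iso_nbr (σ : G ≃g G) (v : V) : nbr G (σ v) = nbr G v := by
  rw [nbr, nbr]
  have himg : G.neighborSet (σ v) = σ '' G.neighborSet v := by
    ext x
    simp only [SimpleGraph.mem_neighborSet, Set.mem_image]
    constructor
    · intro h
      refine ⟨σ.symm x, ?_, σ.apply_symm_apply x⟩
      have h2 : G.Adj (σ v) (σ (σ.symm x)) := by rwa [σ.apply_symm_apply]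
      exact σ.map_adj_iff.mp h2
    · rintro ⟨y, hy, rfl⟩
      exact σ.map_adj_iff.mpr hy
  rw [himg, Set.ncard_image_of_injective _ σ.injective]

lemma c0_ne_c1 (hd : 2 ≤ d) : c0 d hd ≠ c1 d hd := by
  intro h
  have := congrArg Fin.val h
  simp [c0, c1] at this

lemma enum_zero_fst (hd : 2 ≤ d) : (enum d hd 0).1 = c0 d hd := by
  apply Fin.ext
  simp [enum, c0]

lemma enum_one_fst (hd : 2 ≤ d) : (enum d hd 1).1 = c0 d hd := by
  apply Fin.ext
  have h1 : 1 / d = 0 := Nat.div_eq_of_lt (by omega)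
  simp [enum, c0, h1]

lemma enum_zero_ne_one (hd : 2 ≤ d) : enum d hd 0 ≠ enum d hd 1 := by
  intro h
  have := congrArg (fun q : Fin d × Fin d => (q.2 : Fin d).val) h
  simp only [enum] at this
  rw [Nat.zero_mod, Nat.mod_eq_of_lt (show 1 < d by omega)] at this
  exact absurd this (by omega)

theorem core_rigid (hconn : G.Connected) (hd : 2 ≤ d) (hΔd : Δ ≤ d * d)
    (hΔ4 : 4 ≤ Δ → d + 2 ≤ Δ) (hΔ2 : 2 ≤ Δ)
    (hub : ∀ v, nbr G v ≤ Δ) (hr : nbr G r = Δ) (σ : G ≃g G)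
    (hV : ∀ v, cV (G := G) hconn r Δ d hd (σ v) = cV hconn r Δ d hd v)
    (hE : ∀ u v, G.Adj u v →
      cE hconn r Δ d hd s(σ u, σ v) = cE hconn r Δ d hd s(u, v)) :
    ∀ v, σ v = v := by
  have hΔ1 : 1 ≤ Δ := by omega
  have hex : ∀ p, ∃ f : V → Fin d × Fin d, Set.InjOn f (children G r p) ∧
      Set.MapsTo f (children G r p) (allowed G r Δ d hd p) :=
    basef_exists hconn hd hΔd hΔ1 hub hr
  -- a child of the root has pair given by basef
  have hpr_root : ∀ x : V, x ∈ children G r r →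
      pr hconn r Δ d hd x = basef G r Δ d hd r x := by
    intro x hx
    have h1 := pr_eq (Δ := Δ) hconn hd hx.1
    rw [hx.2] at h1
    rw [h1, iota_not_presc (fun hp => hp.2.1 rfl)]
  -- pair of a root child as colors
  have hpair_root : ∀ x : V, x ∈ children G r r →
      (cE hconn r Δ d hd s(r, x), cV hconn r Δ d hd x) = basef G r Δ d hd r x := by
    intro x hx
    rw [cE_child hconn hd hx, cV_of_ne hconn hd hx.1, hpr_root x hx]
  -- THE PINNING LEMMA
  have hpin : σ r = r := by
    by_contra hsr
    have hsrne : σ r ≠ r := hsr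
    have hds : nbr G (σ r) = Δ := by rw [iso_nbr]; exact hr
    by_cases h3 : Δ ≤ 3
    · -- SMALL regime : two 0-colored edges at the root, at most one elsewhere
      have hbs := basef_spec (hd := hd) (hex r)
      have hncr : (children G r r).ncard = Δ := by
        rw [children_r_eq hconn]; exact hr
      have himg_eq : basef G r Δ d hd r '' children G r r = allowed G r Δ d hd r := by
        apply Set.eq_of_subset_of_ncard_le hbs.2.image_subset
        rw [ncard_allowed_root hd hΔd, Set.ncard_image_of_injOn hbs.1, hncr]
      have h0mem : enum d hd 0 ∈ basef G r Δ d hd r '' children G r r := by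
        rw [himg_eq, allowed, if_pos rfl]
        exact ⟨0, by simp only [Set.mem_Iio]; omega, rfl⟩
      have h1mem : enum d hd 1 ∈ basef G r Δ d hd r '' children G r r := by
        rw [himg_eq, allowed, if_pos rfl]
        exact ⟨1, by simp only [Set.mem_Iio]; omega, rfl⟩
      obtain ⟨x, hx, hbx⟩ := h0mem
      obtain ⟨y, hy, hby⟩ := h1mem
      have hxy : x ≠ y := by
        rintro rfl
        exact enum_zero_ne_one hd (hbx.symm.trans hby)
      have hadjx : G.Adj r x := children_subset_nbhd hconn hx
      have hadjy : G.Adj r y := children_subset_nbhd hconn hy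
      have hcex : cE hconn r Δ d hd s(r, x) = c0 d hd := by
        rw [cE_child hconn hd hx, hpr_root x hx, hbx, enum_zero_fst]
      have hcey : cE hconn r Δ d hd s(r, y) = c0 d hd := by
        rw [cE_child hconn hd hy, hpr_root y hy, hby, enum_one_fst]
      -- transported zero edges at σ r
      have htx : cE hconn r Δ d hd s(σ r, σ x) = c0 d hd := by
        rw [hE r x hadjx]; exact hcex
      have hty : cE hconn r Δ d hd s(σ r, σ y) = c0 d hd := by
        rw [hE r y hadjy]; exact hcey
      -- at σ r every 0-colored edge goes to the parent
      have hzero : ∀ z, cE hconn r Δ d hd s(σ r, z) = c0 d hd →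
          z = parent G r (σ r) := by
        intro z h0
        by_cases hc2 : z ≠ r ∧ parent G r z = σ r
        · exfalso
          have hzc : z ∈ children G r (σ r) := ⟨hc2.1, hc2.2⟩
          have he1 : cE hconn r Δ d hd s(σ r, z) = (pr hconn r Δ d hd z).1 :=
            cE_child hconn hd hzc
          have hprz : pr hconn r Δ d hd z = basef G r Δ d hd (σ r) z := by
            have h1 := pr_eq (Δ := Δ) hconn hd hc2.1
            rw [hc2.2] at h1
            rw [h1, iota_not_presc (fun hp => absurd hp.1 (by omega))]
          have hmem := (basef_spec (hd := hd) (hex (σ r))).2 hzc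
          rw [allowed, if_neg hsrne, if_pos h3] at hmem
          rw [he1, hprz, hmem] at h0
          exact c0_ne_c1 hd h0.symm
        · by_cases hc1 : σ r ≠ r ∧ parent G r (σ r) = z
          · exact hc1.2.symm
          · exfalso
            rw [cE_default hconn hd hc1 hc2] at h0
            exact c0_ne_c1 hd h0.symm
      have h1 := hzero (σ x) htx
      have h2 := hzero (σ y) hty
      exact hxy (σ.injective (h1.trans h2.symm))
    · -- LARGE regime : a repeated (edge color, endpoint color) pair at σ r
      have h4 : 4 ≤ Δ := by omega
      have hd2Δ : d + 2 ≤ Δ := hΔ4 h4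
      obtain ⟨x, y, hxney, hadjx, hadjy, heqpair⟩ :
          ∃ x y, x ≠ y ∧ G.Adj (σ r) x ∧ G.Adj (σ r) y ∧
            (cE hconn r Δ d hd s(σ r, x), cV hconn r Δ d hd x) =
            (cE hconn r Δ d hd s(σ r, y), cV hconn r Δ d hd y) := by
        by_cases hch : (children G r (σ r)).Nonempty
        · -- designated child echoes the parent pair
          have hprsc : presc G r Δ (σ r) := ⟨h4, hsrne, hds, hch⟩
          have hxmem := desig_mem (G := G) (r := r) (p := σ r) hch
          refine ⟨desig G r (σ r), parent G r (σ r), ?_, ?_, ?_, ?_⟩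
          · intro h
            have l1 := children_lvl hconn hxmem
            have l2 := lvl_parent (r := r) hconn hsrne
            rw [h] at l1; omega
          · exact children_subset_nbhd hconn hxmem
          · exact adj_parent hconn hsrne
          · have e1 : cE hconn r Δ d hd s(σ r, desig G r (σ r)) =
                (pr hconn r Δ d hd (desig G r (σ r))).1 := cE_child hconn hd hxmem
            have e2 : cV hconn r Δ d hd (desig G r (σ r)) =
                (pr hconn r Δ d hd (desig G r (σ r))).2 := cV_of_ne hconn hd hxmem.1
            have hprd : pr hconn r Δ d hd (desig G r (σ r)) =
                ((F G hconn r Δ d hd (σ r)).1.1, (F G hconn r Δ d hd (σ r)).2) := by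
              have h1 := pr_eq (Δ := Δ) hconn hd hxmem.1
              rw [hxmem.2] at h1
              rw [h1, iota_desig hprsc]
            have e3 : cE hconn r Δ d hd s(σ r, parent G r (σ r)) =
                (pr hconn r Δ d hd (σ r)).1 := cE_parent_edge hconn hd hsrne
            have e4 : cV hconn r Δ d hd (parent G r (σ r)) =
                (F G hconn r Δ d hd (σ r)).2 :=
              (F2_eq_cV_parent hconn hd hsrne).symm
            rw [e1, e2, e3, e4, hprd]
            rfl
        · -- no children : pigeonhole on the ≥ d+1 non-tree neighbors
          have hchE : children G r (σ r) = ∅ := Set.not_nonempty_iff_eq_empty.mp hch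
          have hpmem : parent G r (σ r) ∈ G.neighborSet (σ r) := adj_parent hconn hsrne
          have hT : (G.neighborSet (σ r) \ {parent G r (σ r)}).ncard = Δ - 1 := by
            rw [Set.ncard_diff_singleton_of_mem hpmem]
            have : (G.neighborSet (σ r)).ncard = Δ := hds
            omega
          have hlt : (Set.univ : Set (Fin d)).ncard <
              (G.neighborSet (σ r) \ {parent G r (σ r)}).ncard := by
            rw [hT, Set.ncard_univ, Nat.card_eq_fintype_card, Fintype.card_fin]
            omega
          obtain ⟨x, hx, y, hy, hxy, hcveq⟩ :=
            Set.exists_ne_map_eq_of_ncard_lt_of_maps_to hlt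
              (f := cV hconn r Δ d hd) (fun a _ => Set.mem_univ _) (Set.toFinite _)
          have hnt : ∀ z ∈ G.neighborSet (σ r) \ {parent G r (σ r)},
              cE hconn r Δ d hd s(σ r, z) = c1 d hd := by
            intro z hz
            apply cE_default hconn hd
            · rintro ⟨-, hps⟩
              exact hz.2 (by simp [hps.symm])
            · rintro ⟨hzr, hpz⟩
              have : z ∈ children G r (σ r) := ⟨hzr, hpz⟩
              rw [hchE] at this
              exact this
          refine ⟨x, y, hxy, hx.1, hy.1, ?_⟩
          rw [hnt x hx, hnt y hy, hcveq]
      -- pull the duplicate pair back to the root, contradicting injectivity there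
      have hbs := basef_spec (hd := hd) (hex r)
      have hax' : G.Adj r (σ.symm x) := by
        apply σ.map_adj_iff.mp
        rwa [σ.apply_symm_apply]
      have hay' : G.Adj r (σ.symm y) := by
        apply σ.map_adj_iff.mp
        rwa [σ.apply_symm_apply]
      have hx'c : σ.symm x ∈ children G r r := mem_children_r hconn hax'
      have hy'c : σ.symm y ∈ children G r r := mem_children_r hconn hay'
      have hpairx : basef G r Δ d hd r (σ.symm x) =
          (cE hconn r Δ d hd s(σ r, x), cV hconn r Δ d hd x) := by
        rw [← hpair_root _ hx'c]
        have h1 : cE hconn r Δ d hd s(σ r, x) = cE hconn r Δ d hd s(r, σ.symm x) := by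
          have := hE r (σ.symm x) hax'
          rwa [σ.apply_symm_apply] at this
        have h2 : cV hconn r Δ d hd x = cV hconn r Δ d hd (σ.symm x) := by
          have := hV (σ.symm x)
          rwa [σ.apply_symm_apply] at this
        rw [h1, h2]
      have hpairy : basef G r Δ d hd r (σ.symm y) =
          (cE hconn r Δ d hd s(σ r, y), cV hconn r Δ d hd y) := by
        rw [← hpair_root _ hy'c]
        have h1 : cE hconn r Δ d hd s(σ r, y) = cE hconn r Δ d hd s(r, σ.symm y) := by
          have := hE r (σ.symm y) hay'
          rwa [σ.apply_symm_apply] at this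
        have h2 : cV hconn r Δ d hd y = cV hconn r Δ d hd (σ.symm y) := by
          have := hV (σ.symm y)
          rwa [σ.apply_symm_apply] at this
        rw [h1, h2]
      have : σ.symm x = σ.symm y :=
        hbs.1 hx'c hy'c (by rw [hpairx, hpairy, heqpair])
      exact hxney (by
        have := congrArg σ this
        rwa [σ.apply_symm_apply, σ.apply_symm_apply] at this)
  -- THE LEVEL-BY-LEVEL INDUCTION
  have key : ∀ n, ∀ v, G.dist r v ≤ n → σ v = v := by
    intro n
    induction n with
    | zero =>
      intro v hv
      have hv0 : G.dist r v = 0 := by omega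
      have : v = r := (dist_eq_zero_iff_self hconn).mp hv0
      rw [this, hpin]
    | succ n ih =>
      intro v hv
      rcases Nat.lt_or_ge (G.dist r v) (n + 1) with h | h
      · exact ih v (by omega)
      · have hdv : G.dist r v = n + 1 := by omega
        have hvr : v ≠ r := by
          intro hh
          rw [hh, SimpleGraph.dist_self] at hdv
          exact absurd hdv (by omega)
        have hσdist : G.dist r (σ v) = n + 1 := by
          have := iso_dist hconn σ r v
          rw [hpin] at this
          omega
        have hσvr : σ v ≠ r := by
          intro hh
          rw [hh, SimpleGraph.dist_self] at hσdist
          exact absurd hσdist (by omega)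
        have hps : pset G r (σ v) = pset G r v := by
          ext x
          simp only [pset, Set.mem_setOf_eq, hdv, hσdist]
          constructor
          · rintro ⟨hadj, hx⟩
            have hfx := ih x (by omega)
            refine ⟨?_, hx⟩
            rw [← hfx] at hadj
            exact σ.map_adj_iff.mp hadj
          · rintro ⟨hadj, hx⟩
            have hfx := ih x (by omega)
            refine ⟨?_, hx⟩
            rw [← hfx]
            exact σ.map_adj_iff.mpr hadj
        have hpar : parent G r (σ v) = parent G r v :=
          parent_eq_of_pset_eq hps (pset_nonempty hconn hσvr) (pset_nonempty hconn hvr)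
        have hvchild : v ∈ children G r (parent G r v) := ⟨hvr, rfl⟩
        have hσchild : σ v ∈ children G r (parent G r v) := ⟨hσvr, hpar⟩
        have hpfix : σ (parent G r v) = parent G r v := by
          apply ih
          have := lvl_parent (r := r) hconn hvr
          omega
        have hadjpv : G.Adj (parent G r v) v := (adj_parent hconn hvr).symm
        have hcE : cE hconn r Δ d hd s(parent G r v, σ v) =
            cE hconn r Δ d hd s(parent G r v, v) := by
          have := hE (parent G r v) v hadjpv
          rwa [hpfix] at this
        have h1 : pr hconn r Δ d hd (σ v) = pr hconn r Δ d hd v := by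
          have e1 := cE_child (Δ := Δ) hconn hd hσchild
          have e2 := cE_child (Δ := Δ) hconn hd hvchild
          have e3 := cV_of_ne (Δ := Δ) hconn hd hσvr
          have e4 := cV_of_ne (Δ := Δ) hconn hd hvr
          refine Prod.ext ?_ ?_
          · rw [← e1, ← e2, hcE]
          · rw [← e3, ← e4]
            exact hV v
        have hiinj := iota_injOn (w := F G hconn r Δ d hd (parent G r v)) (hex (parent G r v))
        apply hiinj hσchild hvchild
        have hpr1 : pr hconn r Δ d hd (σ v) =
            iota G r Δ d hd (parent G r v) (F G hconn r Δ d hd (parent G r v)) (σ v) := by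
          rw [pr_eq (Δ := Δ) hconn hd hσvr, hpar]
        have hpr2 : pr hconn r Δ d hd v =
            iota G r Δ d hd (parent G r v) (F G hconn r Δ d hd (parent G r v)) v :=
          pr_eq (Δ := Δ) hconn hd hvr
        rw [← hpr1, ← hpr2, h1]
  intro v
  exact key (G.dist r v) v le_rfl

end Core

section Reduction
variable [Fintype V] {G : SimpleGraph V}

/-- an automorphism preserves the size of neighbor sets (no finiteness needed) -/
lemma iso_nbhd_ncard {W : Type*} {H : SimpleGraph W} (ψ : H ≃g H) (w : W) :
    (H.neighborSet (ψ w)).ncard = (H.neighborSet w).ncard := by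
  have himg : H.neighborSet (ψ w) = ψ '' H.neighborSet w := by
    ext x
    simp only [SimpleGraph.mem_neighborSet, Set.mem_image]
    constructor
    · intro h
      refine ⟨ψ.symm x, ?_, ψ.apply_symm_apply x⟩
      have h2 : H.Adj (ψ w) (ψ (ψ.symm x)) := by rwa [ψ.apply_symm_apply]
      exact ψ.map_adj_iff.mp h2
    · rintro ⟨y, hy, rfl⟩
      exact ψ.map_adj_iff.mpr hy
  rw [himg, Set.ncard_image_of_injective _ ψ.injective]

lemma cg_nbhd_inr (e : G.edgeSet) {a b : V} (hab : (e : Sym2 V) = s(a, b)) :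
    (centralGraph G).neighborSet (Sum.inr e) = {Sum.inl a, Sum.inl b} := by
  have hadj : G.Adj a b := (G.mem_edgeSet).mp (hab ▸ e.2)
  ext x
  cases x with
  | inl u =>
    show u ∈ (e : Sym2 V) ↔ _
    rw [hab, Sym2.mem_iff]
    simp
  | inr f =>
    show False ↔ _
    simp

lemma cg_nbhd_inr_ncard (e : G.edgeSet) :
    ((centralGraph G).neighborSet (Sum.inr e)).ncard = 2 := by
  obtain ⟨ev, he⟩ := e
  induction ev using Sym2.ind with
  | _ a b =>
    rw [cg_nbhd_inr ⟨s(a, b), he⟩ rfl]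
    have hab : a ≠ b := ((G.mem_edgeSet).mp he).ne
    exact Set.ncard_pair (fun h => hab (Sum.inl.injEq a b ▸ h))

lemma cg_nbhd_inl_ncard (hn : 4 ≤ Fintype.card V) (u : V) :
    3 ≤ ((centralGraph G).neighborSet (Sum.inl u)).ncard := by
  classical
  haveI : Finite (G.edgeSet : Set (Sym2 V)) := Set.Finite.to_subtype (Set.toFinite _)
  have hle : ({v : V | v ≠ u}).ncard ≤
      ((centralGraph G).neighborSet (Sum.inl u)).ncard := by
    apply Set.ncard_le_ncard_of_injOn
      (fun v => if h : G.Adj u v then Sum.inr ⟨s(u, v), h⟩ else Sum.inl v)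
    · intro v hv
      by_cases h : G.Adj u v
      · simp only [dif_pos h]
        show u ∈ s(u, v)
        exact Sym2.mem_mk_left u v
      · simp only [dif_neg h]
        exact ⟨fun heq => hv heq.symm, h⟩
    · intro v hv w hw hvw
      by_cases h1 : G.Adj u v <;> by_cases h2 : G.Adj u w
      · simp only [dif_pos h1, dif_pos h2] at hvw
        have h3 := congrArg Subtype.val (Sum.inr.inj hvw)
        exact Sym2.congr_right.mp h3
      · simp only [dif_pos h1, dif_neg h2] at hvw
        exact absurd hvw (by simp)
      · simp only [dif_neg h1, dif_pos h2] at hvw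
        exact absurd hvw (by simp)
      · simp only [dif_neg h1, dif_neg h2] at hvw
        exact Sum.inl.inj hvw
  have hcard : ({v : V | v ≠ u}).ncard = Fintype.card V - 1 := by
    have : {v : V | v ≠ u} = Set.univ \ {u} := by ext x; simp
    rw [this, Set.ncard_diff_singleton_of_mem (Set.mem_univ u),
      Set.ncard_univ, Nat.card_eq_fintype_card]
  omega

theorem central_reduction (hn : 4 ≤ Fintype.card V)
    {d : ℕ} (cVc : V → Fin d) (cEc : Sym2 V → Fin d)
    (hcore : ∀ σ : G ≃g G, (∀ v, cVc (σ v) = cVc v) →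
      (∀ u v, G.Adj u v → cEc s(σ u, σ v) = cEc s(u, v)) → ∀ v, σ v = v)
    (φ : centralGraph G ≃g centralGraph G)
    (hφ : ∀ w, Sum.elim cVc (fun (e : G.edgeSet) => cEc (e : Sym2 V)) (φ w) =
      Sum.elim cVc (fun (e : G.edgeSet) => cEc (e : Sym2 V)) w) :
    ∀ w, φ w = w := by
  classical
  -- φ preserves the two sorts of vertices
  have hAl : ∀ (ψ : centralGraph G ≃g centralGraph G) (u : V),
      ∃ w : V, ψ (Sum.inl u) = Sum.inl w := by
    intro ψ u
    cases h : ψ (Sum.inl u) with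
    | inl w => exact ⟨w, rfl⟩
    | inr e =>
      exfalso
      have h1 := iso_nbhd_ncard ψ (Sum.inl u)
      rw [h, cg_nbhd_inr_ncard] at h1
      have h2 := cg_nbhd_inl_ncard (G := G) hn u
      omega
  -- the vertex permutation
  have hexl := hAl φ
  set σf : V → V := fun u => (hexl u).choose with hσf
  have hσspec : ∀ u, φ (Sum.inl u) = Sum.inl (σf u) := fun u => (hexl u).choose_spec
  have hexl' := hAl φ.symm
  set τf : V → V := fun u => (hexl' u).choose with hτf
  have hτspec : ∀ u, φ.symm (Sum.inl u) = Sum.inl (τf u) := fun u => (hexl' u).choose_spec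
  have hlinv : Function.LeftInverse τf σf := by
    intro u
    have : φ.symm (φ (Sum.inl u)) = Sum.inl u := φ.symm_apply_apply _
    rw [hσspec, hτspec] at this
    exact Sum.inl.injEq _ _ ▸ this
  have hrinv : Function.RightInverse τf σf := by
    intro u
    have : φ (φ.symm (Sum.inl u)) = Sum.inl u := φ.apply_symm_apply _
    rw [hτspec, hσspec] at this
    exact Sum.inl.injEq _ _ ▸ this
  have hinj : Function.Injective σf := hlinv.injective
  -- adjacency preservation
  have hadj_iff : ∀ u v, G.Adj (σf u) (σf v) ↔ G.Adj u v := by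
    intro u v
    by_cases huv : u = v
    · subst huv
      simp [SimpleGraph.irrefl]
    · have hiff : (centralGraph G).Adj (φ (Sum.inl u)) (φ (Sum.inl v)) ↔
          (centralGraph G).Adj (Sum.inl u) (Sum.inl v) := φ.map_adj_iff
      rw [hσspec, hσspec] at hiff
      have h1 : (centralGraph G).Adj (Sum.inl (σf u)) (Sum.inl (σf v)) ↔
          (σf u ≠ σf v ∧ ¬ G.Adj (σf u) (σf v)) := Iff.rfl
      have h2 : (centralGraph G).Adj (Sum.inl u) (Sum.inl v) ↔
          (u ≠ v ∧ ¬ G.Adj u v) := Iff.rfl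
      rw [h1, h2] at hiff
      have hne : σf u ≠ σf v := fun h => huv (hinj h)
      constructor
      · intro ha
        by_contra hna
        exact (hiff.mpr ⟨huv, hna⟩).2 ha
      · intro ha
        by_contra hna
        exact (hiff.mp ⟨hne, hna⟩).2 ha
  -- package as a graph automorphism
  let σG : G ≃g G :=
    ⟨⟨σf, τf, hlinv, hrinv⟩, by intro u v; exact hadj_iff u v⟩
  have hσGapp : ∀ u, σG u = σf u := fun _ => rfl
  -- φ on subdivision vertices
  have hBr : ∀ (e : G.edgeSet),
      φ (Sum.inr e) = Sum.inr ⟨Sym2.map σf (e : Sym2 V), by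
        have := SimpleGraph.Iso.map_mem_edgeSet_iff (e := (e : Sym2 V)) σG
        exact this.mpr e.2⟩ := by
    intro e
    obtain ⟨ev, he⟩ := e
    revert he
    induction ev using Sym2.ind with
    | _ a b =>
      intro he
      cases h : φ (Sum.inr ⟨s(a, b), he⟩) with
      | inl w =>
        exfalso
        have h1 : φ.symm (Sum.inl w) = Sum.inr ⟨s(a, b), he⟩ := by
          rw [← h, φ.symm_apply_apply]
        rw [hτspec] at h1
        exact Sum.inl_ne_inr h1
      | inr f =>
        have hab : a ≠ b := ((G.mem_edgeSet).mp he).ne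
        have hmema : (centralGraph G).Adj (Sum.inl a) (Sum.inr ⟨s(a, b), he⟩) :=
          Sym2.mem_mk_left a b
        have hmemb : (centralGraph G).Adj (Sum.inl b) (Sum.inr ⟨s(a, b), he⟩) :=
          Sym2.mem_mk_right a b
        have ha2 : (centralGraph G).Adj (φ (Sum.inl a)) (φ (Sum.inr ⟨s(a, b), he⟩)) :=
          φ.map_adj_iff.mpr hmema
        have hb2 : (centralGraph G).Adj (φ (Sum.inl b)) (φ (Sum.inr ⟨s(a, b), he⟩)) :=
          φ.map_adj_iff.mpr hmemb
        rw [hσspec, h] at ha2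
        rw [hσspec, h] at hb2
        have hma : σf a ∈ (f : Sym2 V) := ha2
        have hmb : σf b ∈ (f : Sym2 V) := hb2
        have hne : σf a ≠ σf b := fun hh => hab (hinj hh)
        have hfv : (f : Sym2 V) = s(σf a, σf b) :=
          (Sym2.mem_and_mem_iff hne).mp ⟨hma, hmb⟩
        congr 1
        apply Subtype.ext
        rw [hfv]
        simp [Sym2.map_pair_eq]
  -- color preservation for the vertex coloring
  have hV : ∀ v, cVc (σG v) = cVc v := by
    intro v
    have := hφ (Sum.inl v)
    rwa [hσspec] at this
  -- color preservation for the edge coloring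
  have hE : ∀ u v, G.Adj u v → cEc s(σG u, σG v) = cEc s(u, v) := by
    intro u v huv
    show cEc s(σf u, σf v) = cEc s(u, v)
    have := hφ (Sum.inr ⟨s(u, v), huv⟩)
    rw [hBr] at this
    simpa [Sym2.map_pair_eq] using this
  -- apply the core rigidity
  have hfix := hcore σG hV hE
  intro w
  cases w with
  | inl u =>
    rw [hσspec]
    exact congrArg Sum.inl (hfix u)
  | inr e =>
    rw [hBr]
    congr 1
    apply Subtype.ext
    show Sym2.map σf (e : Sym2 V) = (e : Sym2 V)
    obtain ⟨ev, he⟩ := e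
    revert he
    induction ev using Sym2.ind with
    | _ a b =>
      intro he
      show Sym2.map σf s(a, b) = s(a, b)
      rw [Sym2.map_pair_eq, show σf a = a from hfix a, show σf b = b from hfix b]

end Reduction
/-! ### minimum degree bound and final glue lemmas -/

lemma two_le_bound [Fintype V] {G : SimpleGraph V} (hconn : G.Connected)
    (hn : 4 ≤ Fintype.card V) {Δ : ℕ} (hub : ∀ v, nbr G v ≤ Δ) : 2 ≤ Δ := by
  classical
  by_contra hcon
  have huniq : ∀ v y z : V, G.Adj v y → G.Adj v z → y = z := by
    intro v y z hy hz
    by_contra hne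
    have hsub : ({y, z} : Set V) ⊆ G.neighborSet v := by
      intro t ht
      rcases ht with rfl | ht
      · exact hy
      · rw [Set.mem_singleton_iff] at ht; subst ht; exact hz
    have h2 : ({y, z} : Set V).ncard = 2 := Set.ncard_pair hne
    have h3 := Set.ncard_le_ncard hsub (Set.toFinite _)
    have h4 := hub v
    rw [nbr] at h4
    omega
  haveI : Nonempty V := Fintype.card_pos_iff.mp (by omega)
  obtain ⟨a⟩ := (inferInstance : Nonempty V)
  obtain ⟨b, hb⟩ := Fintype.exists_ne_of_one_lt_card (by omega) a
  obtain ⟨w⟩ := hconn.preconnected a b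
  obtain ⟨x, hax⟩ : ∃ x, G.Adj a x := by
    cases w with
    | nil => exact absurd rfl hb
    | cons h q => exact ⟨_, h⟩
  have hstep : ∀ (u w' : V) (p : G.Walk u w'),
      u ∈ ({a, x} : Set V) → w' ∈ ({a, x} : Set V) := by
    intro u w' p
    induction p with
    | nil => exact id
    | cons hadj q ih =>
      intro hu
      apply ih
      simp only [Set.mem_insert_iff, Set.mem_singleton_iff] at hu
      rcases hu with h1 | h1
      · rw [h1] at hadj
        exact Or.inr (huniq a _ _ hadj hax)
      · rw [h1] at hadj
        exact Or.inl (huniq x _ _ hadj hax.symm)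
  have hall : ∀ t : V, t ∈ ({a, x} : Set V) := by
    intro t
    obtain ⟨p⟩ := hconn.preconnected a t
    exact hstep a t p (Set.mem_insert a _)
  have h1 : (Set.univ : Set V).ncard ≤ ({a, x} : Set V).ncard :=
    Set.ncard_le_ncard (fun t _ => hall t) (Set.toFinite _)
  have h2 : ({a, x} : Set V).ncard ≤ 2 := by
    refine (Set.ncard_insert_le _ _).trans ?_
    simp
  rw [Set.ncard_univ, Nat.card_eq_fintype_card] at h1
  omega

end Stmt7Aux


/-- For a connected graph `G` of order at least `4`,
`D(C(G)) ≤ ⌈√Δ(G)⌉`. -/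
theorem stmt_7 {V : Type*} [Fintype V] (G : SimpleGraph V)
    (hconn : G.Connected) (hn : 4 ≤ Fintype.card V) :
    distinguishingNumber (centralGraph G) ≤ ⌈Real.sqrt (maxDeg G)⌉₊ := by
  classical
  have hbdd : BddAbove {k | ∃ v : V, k = (G.neighborSet v).ncard} := by
    refine ⟨Fintype.card V, ?_⟩
    rintro k ⟨v, rfl⟩
    have h1 := Set.ncard_le_ncard (Set.subset_univ (G.neighborSet v)) (Set.toFinite _)
    rwa [Set.ncard_univ, Nat.card_eq_fintype_card] at h1
  haveI hneV : Nonempty V := Fintype.card_pos_iff.mp (by omega)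
  have hub : ∀ v, Stmt7Aux.nbr G v ≤ maxDeg G := fun v =>
    le_csSup hbdd ⟨v, rfl⟩
  have hmem : maxDeg G ∈ {k | ∃ v : V, k = (G.neighborSet v).ncard} :=
    Nat.sSup_mem ⟨(G.neighborSet (Classical.arbitrary V)).ncard, ⟨_, rfl⟩⟩ hbdd
  obtain ⟨r, hrr⟩ := hmem
  have hr : Stmt7Aux.nbr G r = maxDeg G := hrr.symm
  have hΔ2 : 2 ≤ maxDeg G := Stmt7Aux.two_le_bound hconn hn hub
  have hd : 2 ≤ ⌈Real.sqrt (maxDeg G)⌉₊ := by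
    have h1 : (1 : ℝ) < Real.sqrt (maxDeg G) := by
      have h0 : (1 : ℝ) < (maxDeg G : ℝ) := by exact_mod_cast hΔ2
      nlinarith [Real.sq_sqrt (show (0:ℝ) ≤ (maxDeg G : ℝ) by positivity),
        Real.sqrt_nonneg ((maxDeg G : ℝ))]
    have h2 := Nat.lt_ceil.mpr (show ((1:ℕ):ℝ) < Real.sqrt (maxDeg G) by exact_mod_cast h1)
    omega
  have hΔd : maxDeg G ≤ ⌈Real.sqrt (maxDeg G)⌉₊ * ⌈Real.sqrt (maxDeg G)⌉₊ := by
    have h1 : Real.sqrt (maxDeg G) ≤ (⌈Real.sqrt (maxDeg G)⌉₊ : ℝ) := Nat.le_ceil _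
    have h2 : (maxDeg G : ℝ) ≤ (⌈Real.sqrt (maxDeg G)⌉₊ : ℝ) * (⌈Real.sqrt (maxDeg G)⌉₊ : ℝ) := by
      nlinarith [Real.sq_sqrt (show (0:ℝ) ≤ (maxDeg G : ℝ) by positivity),
        Real.sqrt_nonneg ((maxDeg G : ℝ))]
    exact_mod_cast h2
  have hΔ4 : 4 ≤ maxDeg G → ⌈Real.sqrt (maxDeg G)⌉₊ + 2 ≤ maxDeg G := by
    intro h4
    by_contra hcon
    have h5 : maxDeg G ≤ ⌈Real.sqrt (maxDeg G)⌉₊ + 1 := by omega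
    have h6 : ((⌈Real.sqrt (maxDeg G)⌉₊ : ℝ)) < Real.sqrt (maxDeg G) + 1 :=
      Nat.ceil_lt_add_one (Real.sqrt_nonneg _)
    have h7 : (maxDeg G : ℝ) ≤ (⌈Real.sqrt (maxDeg G)⌉₊ : ℝ) + 1 := by exact_mod_cast h5
    have h8 : (4 : ℝ) ≤ (maxDeg G : ℝ) := by exact_mod_cast h4
    have h9 : (2 : ℝ) ≤ (⌈Real.sqrt (maxDeg G)⌉₊ : ℝ) := by exact_mod_cast hd
    nlinarith [Real.sq_sqrt (show (0:ℝ) ≤ (maxDeg G : ℝ) by positivity),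
      Real.sqrt_nonneg ((maxDeg G : ℝ))]
  apply Nat.sInf_le
  exact ⟨Sum.elim (Stmt7Aux.cV hconn r (maxDeg G) (⌈Real.sqrt (maxDeg G)⌉₊) hd)
      (fun (e : G.edgeSet) =>
        Stmt7Aux.cE hconn r (maxDeg G) (⌈Real.sqrt (maxDeg G)⌉₊) hd (e : Sym2 V)),
    fun φ hφ => Stmt7Aux.central_reduction hn _ _
      (fun σ hV hE =>
        Stmt7Aux.core_rigid hconn hd hΔd hΔ4 hΔ2 hub hr σ hV hE) φ hφ⟩
end
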